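/- The subgroup A ⋉ N of SO(V)_{Rp} acts simply transitively on hyperbolic space L^{n+1}: for any two points v, w ∈ L^{n+1} there is a unique element of A ⋉ N taking v to w. -/

import Mathlib

open Matrix

/-- Index type for the basis `p, e_1, …, e_n, q` of the `(n+2)`-dimensional Minkowski space:
`Sum.inl 0` is `p`, `Sum.inr (Sum.inl i)` is `e_i`, `Sum.inr (Sum.inr 0)` is `q`. -/
abbrev Ix (n : ℕ) := Fin 1 ⊕ (Fin n ⊕ Fin 1)

def pidx (n : ℕ) : Ix n := Sum.inl 0
def qidx (n : ℕ) : Ix n := Sum.inr (Sum.inr 0)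
def midx (n : ℕ) (i : Fin n) : Ix n := Sum.inr (Sum.inl i)

/-- The Minkowski form `η` in the basis `p, e_1, …, e_n, q`:
`η(p,q) = η(q,p) = 1`, `η(e_i,e_i) = 1`, all other products zero. -/
def eta (n : ℕ) (x y : Ix n → ℝ) : ℝ :=
  x (pidx n) * y (qidx n) + x (qidx n) * y (pidx n) +
    ∑ i : Fin n, x (midx n i) * y (midx n i)

/-- The basis vector `p`. -/
def pVec (n : ℕ) : Ix n → ℝ := Pi.single (pidx n) 1
/-- The basis vector `q`. -/
def qVec (n : ℕ) : Ix n → ℝ := Pi.single (qidx n) 1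

/-- The matrix `diag(a, Id, 1/a)` (element of the group `A`). -/
noncomputable def aMat (n : ℕ) (a : ℝ) : Matrix (Ix n) (Ix n) ℝ := fun i j =>
  match i, j with
  | Sum.inl _, Sum.inl _ => a
  | Sum.inr (Sum.inl i), Sum.inr (Sum.inl j) => if i = j then 1 else 0
  | Sum.inr (Sum.inr _), Sum.inr (Sum.inr _) => a⁻¹
  | _, _ => 0

/-- The matrix `diag(1, f, 1)` (element of the group `K`). -/
def kMat (n : ℕ) (f : Matrix (Fin n) (Fin n) ℝ) : Matrix (Ix n) (Ix n) ℝ := fun i j =>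
  match i, j with
  | Sum.inl _, Sum.inl _ => 1
  | Sum.inr (Sum.inl i), Sum.inr (Sum.inl j) => f i j
  | Sum.inr (Sum.inr _), Sum.inr (Sum.inr _) => 1
  | _, _ => 0

/-- The matrix `[[1, -Xᵀ, -XᵀX/2], [0, Id, X], [0, 0, 1]]` (element of the group `N`). -/
noncomputable def nMat (n : ℕ) (X : Fin n → ℝ) : Matrix (Ix n) (Ix n) ℝ := fun i j =>
  match i, j with
  | Sum.inl _, Sum.inl _ => 1
  | Sum.inl _, Sum.inr (Sum.inl j) => -X j
  | Sum.inl _, Sum.inr (Sum.inr _) => -(∑ i : Fin n, X i * X i) / 2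
  | Sum.inr (Sum.inl _), Sum.inl _ => 0
  | Sum.inr (Sum.inl i), Sum.inr (Sum.inl j) => if i = j then 1 else 0
  | Sum.inr (Sum.inl i), Sum.inr (Sum.inr _) => X i
  | Sum.inr (Sum.inr _), Sum.inl _ => 0
  | Sum.inr (Sum.inr _), Sum.inr (Sum.inl _) => 0
  | Sum.inr (Sum.inr _), Sum.inr (Sum.inr _) => 1

/-- The identification of the Euclidean space `E` with `∂L^{n+1} \ {ℝp}`: the point `X ∈ E`
corresponds to the isotropic line spanned by `ι(X) = -(‖X‖²/2)·p + X + q`. -/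
noncomputable def iota (n : ℕ) (X : Fin n → ℝ) : Ix n → ℝ := fun i =>
  match i with
  | Sum.inl _ => -(∑ j : Fin n, X j * X j) / 2
  | Sum.inr (Sum.inl j) => X j
  | Sum.inr (Sum.inr _) => 1

section aux
variable {n : ℕ}

lemma sum_Ix (f : Ix n → ℝ) :
    ∑ i, f i = f (pidx n) + (∑ i : Fin n, f (midx n i)) + f (qidx n) := by
  rw [Fintype.sum_sum_type, Fintype.sum_sum_type, Fin.sum_univ_one, Fin.sum_univ_one]
  simp [pidx, midx, qidx]
  ring

lemma nMat_mulVec_p (X : Fin n → ℝ) (v : Ix n → ℝ) :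
    (nMat n X).mulVec v (pidx n)
      = v (pidx n) - (∑ j, X j * v (midx n j))
        - (∑ j, X j * X j) / 2 * v (qidx n) := by
  simp only [Matrix.mulVec, dotProduct]
  rw [sum_Ix]
  simp [nMat, pidx, midx, qidx, Finset.mul_sum]
  ring

lemma nMat_mulVec_m (X : Fin n → ℝ) (v : Ix n → ℝ) (i : Fin n) :
    (nMat n X).mulVec v (midx n i) = v (midx n i) + X i * v (qidx n) := by
  simp only [Matrix.mulVec, dotProduct]
  rw [sum_Ix]
  simp [nMat, pidx, midx, qidx, ite_mul, Finset.sum_ite_eq]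

lemma nMat_mulVec_q (X : Fin n → ℝ) (v : Ix n → ℝ) :
    (nMat n X).mulVec v (qidx n) = v (qidx n) := by
  simp only [Matrix.mulVec, dotProduct]
  rw [sum_Ix]
  simp [nMat, pidx, midx, qidx]

lemma aMat_mulVec_p (a : ℝ) (v : Ix n → ℝ) :
    (aMat n a).mulVec v (pidx n) = a * v (pidx n) := by
  simp only [Matrix.mulVec, dotProduct]
  rw [sum_Ix]
  simp [aMat, pidx, midx, qidx]

lemma aMat_mulVec_m (a : ℝ) (v : Ix n → ℝ) (i : Fin n) :
    (aMat n a).mulVec v (midx n i) = v (midx n i) := by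
  simp only [Matrix.mulVec, dotProduct]
  rw [sum_Ix]
  simp [aMat, pidx, midx, qidx, ite_mul, Finset.sum_ite_eq]

lemma aMat_mulVec_q (a : ℝ) (v : Ix n → ℝ) :
    (aMat n a).mulVec v (qidx n) = a⁻¹ * v (qidx n) := by
  simp only [Matrix.mulVec, dotProduct]
  rw [sum_Ix]
  simp [aMat, pidx, midx, qidx]

lemma prod_mulVec (a : ℝ) (X : Fin n → ℝ) (v : Ix n → ℝ) :
    (aMat n a * nMat n X).mulVec v = (aMat n a).mulVec ((nMat n X).mulVec v) := by
  rw [Matrix.mulVec_mulVec]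

end aux


/-- the subgroup `A ⋉ N ⊆ SO(V)_{ℝp}` (whose elements are the products
`aMat a * nMat X`, `a > 0`, `X ∈ ℝ^n`) acts simply transitively on hyperbolic space
`L^{n+1} = {x : η(x,x) = -1, η(x, p - q) < 0}` (the time-positive sheet): for any two
points `v, w ∈ L^{n+1}` there is a unique element of `A ⋉ N` taking `v` to `w`. -/
theorem stmt15 (n : ℕ) (v w : Ix n → ℝ)
    (hv : eta n v v = -1) (hv0 : eta n v (pVec n - qVec n) < 0)
    (hw : eta n w w = -1) (hw0 : eta n w (pVec n - qVec n) < 0) :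
    ∃! g : ℝ × (Fin n → ℝ),
      0 < g.1 ∧ (aMat n g.1 * nMat n g.2).mulVec v = w := by
  simp only [eta, pVec, qVec, Pi.sub_apply, Pi.single_apply, pidx, qidx, midx] at hv0 hw0 hv hw
  simp only [reduceCtorEq, if_false, if_true, ite_true, sub_zero, zero_sub, mul_neg, mul_one,
    mul_zero, neg_zero, add_zero, zero_add, Finset.sum_const_zero, if_pos trivial,
    Sum.inr.injEq] at hv0 hw0
  have hSv : (0:ℝ) ≤ ∑ x : Fin n, v (Sum.inr (Sum.inl x)) * v (Sum.inr (Sum.inl x)) :=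
    Finset.sum_nonneg fun i _ => mul_self_nonneg _
  have hSw : (0:ℝ) ≤ ∑ x : Fin n, w (Sum.inr (Sum.inl x)) * w (Sum.inr (Sum.inl x)) :=
    Finset.sum_nonneg fun i _ => mul_self_nonneg _
  have hvq : v (Sum.inr (Sum.inr 0)) < 0 := by
    by_contra h
    push_neg at h
    nlinarith
  have hwq : w (Sum.inr (Sum.inr 0)) < 0 := by
    by_contra h
    push_neg at h
    nlinarith
  have hvqne : v (Sum.inr (Sum.inr 0)) ≠ 0 := ne_of_lt hvq
  have hwqne : w (Sum.inr (Sum.inr 0)) ≠ 0 := ne_of_lt hwq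
  refine ⟨⟨v (Sum.inr (Sum.inr 0)) / w (Sum.inr (Sum.inr 0)),
      fun i => (w (Sum.inr (Sum.inl i)) - v (Sum.inr (Sum.inl i))) / v (Sum.inr (Sum.inr 0))⟩,
    ⟨div_pos_of_neg_of_neg hvq hwq, ?_⟩, ?_⟩
  · rw [← Matrix.mulVec_mulVec]
    funext i
    obtain a | i | a := i
    · obtain rfl : a = 0 := Subsingleton.elim _ _
      rw [show (Sum.inl 0 : Ix n) = pidx n from rfl, aMat_mulVec_p, nMat_mulVec_p]
      simp only [pidx, qidx, midx]
      have e1 : ∑ j : Fin n,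
          ((w (Sum.inr (Sum.inl j)) - v (Sum.inr (Sum.inl j))) / v (Sum.inr (Sum.inr 0)))
            * v (Sum.inr (Sum.inl j))
          = ((∑ j : Fin n, w (Sum.inr (Sum.inl j)) * v (Sum.inr (Sum.inl j)))
              - ∑ j : Fin n, v (Sum.inr (Sum.inl j)) * v (Sum.inr (Sum.inl j)))
              / v (Sum.inr (Sum.inr 0)) := by
        rw [← Finset.sum_sub_distrib, Finset.sum_div]
        exact Finset.sum_congr rfl fun j _ => by field_simp
      have e2 : ∑ j : Fin n,
          (((w (Sum.inr (Sum.inl j)) - v (Sum.inr (Sum.inl j))) / v (Sum.inr (Sum.inr 0)))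
            * ((w (Sum.inr (Sum.inl j)) - v (Sum.inr (Sum.inl j))) / v (Sum.inr (Sum.inr 0))))
          = ((∑ j : Fin n, w (Sum.inr (Sum.inl j)) * w (Sum.inr (Sum.inl j)))
              - 2 * (∑ j : Fin n, w (Sum.inr (Sum.inl j)) * v (Sum.inr (Sum.inl j)))
              + ∑ j : Fin n, v (Sum.inr (Sum.inl j)) * v (Sum.inr (Sum.inl j)))
              / (v (Sum.inr (Sum.inr 0)) * v (Sum.inr (Sum.inr 0))) := by
        rw [Finset.mul_sum, ← Finset.sum_sub_distrib, ← Finset.sum_add_distrib, Finset.sum_div]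
        exact Finset.sum_congr rfl fun j _ => by field_simp; ring
      rw [e1, e2]
      rw [div_mul_eq_mul_div, div_eq_iff hwqne]
      field_simp
      simp only [sq]
      linear_combination hv - hw
    · rw [show (Sum.inr (Sum.inl i) : Ix n) = midx n i from rfl, aMat_mulVec_m, nMat_mulVec_m]
      simp only [pidx, qidx, midx]
      field_simp
      ring
    · obtain rfl : a = 0 := Subsingleton.elim _ _
      rw [show (Sum.inr (Sum.inr 0) : Ix n) = qidx n from rfl, aMat_mulVec_q, nMat_mulVec_q]
      simp only [pidx, qidx, midx]
      field_simp
  · rintro ⟨a, X⟩ ⟨ha, hEq⟩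
    rw [← Matrix.mulVec_mulVec] at hEq
    have hq := congrFun hEq (qidx n)
    rw [aMat_mulVec_q, nMat_mulVec_q] at hq
    simp only [qidx] at hq
    have hane : a ≠ 0 := ne_of_gt ha
    have ha' : a = v (Sum.inr (Sum.inr 0)) / w (Sum.inr (Sum.inr 0)) := by
      field_simp at hq ⊢
      linarith [hq]
    have hX : X = fun i =>
        (w (Sum.inr (Sum.inl i)) - v (Sum.inr (Sum.inl i))) / v (Sum.inr (Sum.inr 0)) := by
      funext i
      have hm := congrFun hEq (midx n i)
      rw [aMat_mulVec_m, nMat_mulVec_m] at hm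
      simp only [midx, qidx] at hm
      field_simp
      linarith [hm]
    exact Prod.ext ha' hX
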